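/- Let G be a P_5-free graph containing an induced 5-cycle v_1v_2v_3v_4v_5, let Z be the set of vertices with no neighbour on the cycle, and let C_i, T_i be the sets of outside vertices whose cycle-neighbourhood is exactly {v_{i−1},v_{i+1}} and {v_{i−1},v_i,v_{i+1}} respectively. Then Z is anticomplete to ⋃_i (C_i ∪ T_i): no vertex of Z has a neighbour in any C_i or T_i. -/

import Mathlib

open SimpleGraph

/-- A graph is `k`-vertex-critical if its chromatic number is `k` and deleting
any vertex decreases the chromatic number below `k`. -/
def IsKVertexCritical {V : Type} (G : SimpleGraph V) (k : ℕ) : Prop :=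
  G.chromaticNumber = k ∧ ∀ v : V, (G.induce {v}ᶜ).chromaticNumber < k

/-- `G` contains an induced subgraph isomorphic to `H`. -/
def HasInducedCopy {V W : Type} (G : SimpleGraph V) (H : SimpleGraph W) : Prop :=
  ∃ s : Set V, Nonempty (H ≃g G.induce s)

/-- The path on 5 vertices. -/
def P5 : SimpleGraph (Fin 5) := SimpleGraph.pathGraph 5

/-- The disjoint union of a path on 3 vertices (0-1-2) and an edge (3-4). -/
def P3P2 : SimpleGraph (Fin 5) :=
  SimpleGraph.fromRel (fun a b => (a = 0 ∧ b = 1) ∨ (a = 1 ∧ b = 2) ∨ (a = 3 ∧ b = 4))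

/-- The complement of `P3 + P2`. -/
def coP3P2 : SimpleGraph (Fin 5) := P3P2ᶜ

/-- The 3-vertex graph with exactly one edge (the disjoint union `P2 + P1`). -/
def P2P1 : SimpleGraph (Fin 3) := SimpleGraph.fromRel (fun a b => a = 0 ∧ b = 1)

/-!- auxiliary lemmas -/

instance : DecidableRel P5.Adj :=
  fun _ _ => decidable_of_iff _ (SimpleGraph.pathGraph_adj).symm

lemma mk_copy {V : Type} (G : SimpleGraph V) (f : Fin 5 → V)
    (hinj : Function.Injective f)
    (hadj : ∀ a b, G.Adj (f a) (f b) ↔ P5.Adj a b) : HasInducedCopy G P5 := by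
  refine ⟨Set.range f, ⟨{ toEquiv := Equiv.ofInjective f hinj, map_rel_iff' := ?_ }⟩⟩
  intro a b
  simp [SimpleGraph.comap, Equiv.ofInjective, hadj]

lemma key {V : Type} (G : SimpleGraph V) (hP5 : ¬ HasInducedCopy G P5)
    (v : Fin 5 → V) (hv : Function.Injective v)
    (hC5 : ∀ i j : Fin 5, G.Adj (v i) (v j) ↔ (j = i + 1 ∨ i = j + 1))
    (z c : V) (hz1 : ∀ j, z ≠ v j) (hz2 : ∀ j, ¬ G.Adj z (v j))
    (hc1 : ∀ j, c ≠ v j) (i : Fin 5)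
    (h1 : G.Adj c (v (i+1))) (h2 : ¬ G.Adj c (v (i+2))) (h3 : ¬ G.Adj c (v (i+3))) :
    ¬ G.Adj z c := by
  intro hzc
  apply hP5
  have nv : ∀ a b : Fin 5, a ≠ b → v (i+a) ≠ v (i+b) :=
    fun a b h hh => h (add_left_cancel (hv hh))
  have h12 : ¬ G.Adj (v (i+1)) (v (i+3)) := by
    rw [hC5]; rintro (h | h) <;> rw [add_assoc] at h <;>
      exact absurd (add_left_cancel h) (by decide)
  have e12 : G.Adj (v (i+1)) (v (i+2)) := by rw [hC5]; left; rw [add_assoc]; rfl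
  have e23 : G.Adj (v (i+2)) (v (i+3)) := by rw [hC5]; left; rw [add_assoc]; rfl
  apply mk_copy G (fun k => match k with
    | 0 => z | 1 => c | 2 => v (i+1) | 3 => v (i+2) | 4 => v (i+3))
  · intro a b hab
    fin_cases a <;> fin_cases b <;>
      first
      | rfl
      | exact absurd hab (by first
          | exact hzc.ne | exact hz1 _ | exact hc1 _ | exact nv _ _ (by decide))
      | exact absurd hab.symm (by first
          | exact hzc.ne | exact hz1 _ | exact hc1 _ | exact nv _ _ (by decide))
  · intro a b
    fin_cases a <;> fin_cases b <;>
      first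
      | exact iff_of_true (by first
          | exact hzc | exact hzc.symm | exact h1 | exact h1.symm
          | exact e12 | exact e12.symm | exact e23 | exact e23.symm) (by decide)
      | exact iff_of_false (fun h => by first
          | exact hz2 _ h | exact hz2 _ h.symm | exact h2 h | exact h2 h.symm
          | exact h3 h | exact h3 h.symm | exact h12 h | exact h12 h.symm
          | exact G.loopless.irrefl _ h) (by decide)

lemma nadd {i a b : Fin 5} (hab : a ≠ b) : i + a ≠ i + b := fun h => hab (add_left_cancel h)

/-- In a `P5`-free graph with an induced 5-cycle, the set `Z` of vertices with no
neighbour on the cycle is anticomplete to every `C_i` and `T_i`. -/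
theorem stmt_12 {V : Type} [Fintype V] (G : SimpleGraph V)
    (hP5 : ¬ HasInducedCopy G P5)
    (v : Fin 5 → V) (hv : Function.Injective v)
    (hC5 : ∀ i j : Fin 5, G.Adj (v i) (v j) ↔ (j = i + 1 ∨ i = j + 1)) :
    ∀ z ∈ {u : V | (∀ j, u ≠ v j) ∧ ∀ j : Fin 5, ¬ G.Adj u (v j)},
      ∀ i : Fin 5,
        (∀ c ∈ {u : V | (∀ j, u ≠ v j) ∧
            ∀ j : Fin 5, G.Adj u (v j) ↔ (j = i - 1 ∨ j = i + 1)}, ¬ G.Adj z c) ∧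
        (∀ t ∈ {u : V | (∀ j, u ≠ v j) ∧
            ∀ j : Fin 5, G.Adj u (v j) ↔ (j = i - 1 ∨ j = i ∨ j = i + 1)}, ¬ G.Adj z t) := by
  rintro z ⟨hz1, hz2⟩ i
  have hm : i - 1 = i + 4 := by rw [sub_eq_add_neg]; congr 1
  constructor
  · rintro c ⟨hc1, hc2⟩ hadj
    refine key G hP5 v hv hC5 z c hz1 hz2 hc1 i ?_ ?_ ?_ hadj
    · rw [hc2]; right; rfl
    · rw [hc2, hm]; rintro (h | h) <;> exact nadd (by decide) h
    · rw [hc2, hm]; rintro (h | h) <;> exact nadd (by decide) h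
  · rintro c ⟨hc1, hc2⟩ hadj
    refine key G hP5 v hv hC5 z c hz1 hz2 hc1 i ?_ ?_ ?_ hadj
    · rw [hc2]; right; right; rfl
    · rw [hc2, hm]
      rintro (h | h | h)
      · exact nadd (by decide) h
      · exact nadd (by decide) (h.trans (add_zero i).symm)
      · exact nadd (by decide) h
    · rw [hc2, hm]
      rintro (h | h | h)
      · exact nadd (by decide) h
      · exact nadd (by decide) (h.trans (add_zero i).symm)
      · exact nadd (by decide) h
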